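/- arXiv:2110.10350 — 2 statements merged into one kernel-verified Lean document; each statement's English description precedes it below -/
import Mathlib

section
/- Let V be a valuation ring with algebraically closed fraction field, k the residue field of the valuation ring of some field C containing V with V → O_C, and V̄ the image of V in k. If V is the pullback of V̄ ⊂ k along O_C → k (i.e. V = O_C ×_k V̄), then to give a finite projective module over V is equivalent to giving finite projective modules over O_C and over V̄ together with an isomorphism of their base changes to k. -/
open CategoryTheory

universe v

/-- A gluing (Milnor patching) triple for the square of rings `f : B → D ← C : g`:
a finite projective `B`-module, a finite projective `C`-module, and an isomorphism of their
base changes to `D`. -/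
structure GlueObj {B C D : Type} [CommRing B] [CommRing C] [CommRing D]
    (f : B →+* D) (g : C →+* D) : Type (v + 1) where
  MB : ModuleCat.{v} B
  MC : ModuleCat.{v} C
  finB : Module.Finite B MB
  projB : Module.Projective B MB
  finC : Module.Finite C MC
  projC : Module.Projective C MC
  glue : (ModuleCat.extendScalars.{0, 0, v} f).obj MB ≅ (ModuleCat.extendScalars.{0, 0, v} g).obj MC

namespace GlueObj

variable {B C D : Type} [CommRing B] [CommRing C] [CommRing D]
    {f : B →+* D} {g : C →+* D}

/-- Morphisms of gluing triples. -/
@[ext]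
structure Hom (X Y : GlueObj.{v} f g) where
  hB : X.MB ⟶ Y.MB
  hC : X.MC ⟶ Y.MC
  comm : (ModuleCat.extendScalars f).map hB ≫ Y.glue.hom
      = X.glue.hom ≫ (ModuleCat.extendScalars g).map hC

instance : Category (GlueObj.{v} f g) where
  Hom X Y := Hom X Y
  id X := ⟨𝟙 X.MB, 𝟙 X.MC, by simp⟩
  comp u v := ⟨u.hB ≫ v.hB, u.hC ≫ v.hC, by
    simp only [Functor.map_comp, Category.assoc, v.comm]
    rw [← Category.assoc, u.comm, Category.assoc]⟩
  id_comp u := by apply Hom.ext <;> simp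
  comp_id u := by apply Hom.ext <;> simp
  assoc u v w := by apply Hom.ext <;> simp

end GlueObj

open TensorProduct ChangeOfRings

namespace MilnorAux

section Eps

variable {B D : Type} [CommRing B] [CommRing D] (f : B →+* D)

/-- The `B`-linear map `(Fin n → B) → (Fin n → D)` given by applying `f` coordinatewise. -/
noncomputable def piMap (n : ℕ) :
    ModuleCat.of B (Fin n → B) ⟶
      (ModuleCat.restrictScalars f).obj (ModuleCat.of D (Fin n → D)) := ModuleCat.ofHom
  (Y := ↑((ModuleCat.restrictScalars f).obj (ModuleCat.of D (Fin n → D))))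
 { toFun v := fun i => f (v i)
   map_add' v w := by funext i; show f (v i + w i) = f (v i) + f (w i); rw [map_add]
   map_smul' b v := by
    funext i
    show f (b * v i) = f b * f (v i)
    rw [map_mul] }

noncomputable def epsHom (n : ℕ) :
    (ModuleCat.extendScalars.{0,0,0} f).obj (ModuleCat.of B (Fin n → B)) ⟶
      ModuleCat.of D (Fin n → D) :=
  ModuleCat.ExtendRestrictScalarsAdj.HomEquiv.fromExtendScalars f (piMap f n)

@[simp] lemma epsHom_tmul (n : ℕ) (d : D) (v : Fin n → B) :
    epsHom f n (d ⊗ₜ[B,f] v) = fun i => d * f (v i) := by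
  letI : Module B D := Module.compHom D f
  letI : Module B ↑(ModuleCat.of D (Fin n → D)) := Module.compHom _ f
  erw [epsHom, ModuleCat.ExtendRestrictScalarsAdj.HomEquiv.fromExtendScalars_hom_apply,
    TensorProduct.lift.tmul]
  rfl

noncomputable def epsInvHom (n : ℕ) :
    ModuleCat.of D (Fin n → D) ⟶
      (ModuleCat.extendScalars.{0,0,0} f).obj (ModuleCat.of B (Fin n → B)) := ModuleCat.ofHom
  (Y := ↑((ModuleCat.extendScalars.{0,0,0} f).obj (ModuleCat.of B (Fin n → B))))
 { toFun v := ∑ i : Fin n, v i ⊗ₜ[B,f] (Pi.single i (1 : B) : Fin n → B)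
   map_add' v w := by
    letI : Module B D := Module.compHom D f
    erw [← Finset.sum_add_distrib]
    exact Finset.sum_congr rfl fun i _ => by
      show ((v i + w i) ⊗ₜ[B,f] (Pi.single i (1:B) : Fin n → B)) = _
      erw [TensorProduct.add_tmul]; rfl
   map_smul' d v := by
    simp only [RingHom.id_apply]
    erw [Finset.smul_sum]
    exact Finset.sum_congr rfl fun i _ => by
      show ((d * v i) ⊗ₜ[B,f] (Pi.single i (1:B) : Fin n → B)) = _
      exact (ModuleCat.ExtendScalars.smul_tmul (M := ModuleCat.of B (Fin n → B)) f d (v i) (Pi.single i 1)).symm }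

@[simp] lemma epsInvHom_apply (n : ℕ) (v : Fin n → D) :
    epsInvHom f n v = ∑ i : Fin n, v i ⊗ₜ[B,f] (Pi.single i (1 : B) : Fin n → B) := rfl

noncomputable def eps (n : ℕ) :
    (ModuleCat.extendScalars.{0,0,0} f).obj (ModuleCat.of B (Fin n → B)) ≅
      ModuleCat.of D (Fin n → D) where
  hom := epsHom f n
  inv := epsInvHom f n
  hom_inv_id := by
    letI : Module B D := Module.compHom D f
    apply ModuleCat.hom_ext
    apply LinearMap.ext
    intro x
    show epsInvHom f n (epsHom f n x) = x
    induction x using TensorProduct.induction_on with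
    | zero => erw [map_zero]; rfl
    | tmul d v =>
      change D at d
      erw [epsHom_tmul, epsInvHom_apply]
      have h : ∀ i : Fin n, ((d * f (v i)) ⊗ₜ[B,f] (Pi.single i (1:B) : Fin n → B) :
          (ModuleCat.extendScalars.{0,0,0} f).obj (ModuleCat.of B (Fin n → B)))
          = d ⊗ₜ[B,f] (Pi.single i (v i) : Fin n → B) := by
        intro i
        have h3 := TensorProduct.smul_tmul (R := B) (R' := B)
          (M := ↑((ModuleCat.restrictScalars f).obj (ModuleCat.of D D)))
          (N := ↑(ModuleCat.of B (Fin n → B))) (v i) d (Pi.single i (1:B))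
        have h4 : ((v i) • d : ↑((ModuleCat.restrictScalars f).obj (ModuleCat.of D D)))
            = d * f (v i) := by
          show f (v i) * d = _
          ring
        erw [h4] at h3
        erw [h3]
        congr 1
        erw [← Pi.single_smul, smul_eq_mul, mul_one]
      erw [Finset.sum_congr rfl (fun i _ => h i), ← TensorProduct.tmul_sum]
      congr 1
      exact Finset.univ_sum_single v
    | add x y hx hy => erw [map_add, map_add, hx, hy]; rfl
  inv_hom_id := by
    apply ModuleCat.hom_ext
    apply LinearMap.ext
    intro v
    show epsHom f n (epsInvHom f n v) = v
    erw [epsInvHom_apply, map_sum]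
    funext j
    erw [Finset.sum_apply]
    have h : ∀ i : Fin n, (epsHom f n ((v i) ⊗ₜ[B,f] (Pi.single i (1:B) : Fin n → B))) j
        = if j = i then v i else 0 := by
      intro i
      erw [epsHom_tmul]
      simp [Pi.single_apply, apply_ite f]
    erw [Finset.sum_congr rfl (fun i _ => h i)]
    simp

lemma eps_naturality {n m : ℕ} (M : Matrix (Fin m) (Fin n) B) :
    (ModuleCat.extendScalars.{0,0,0} f).map
        (ModuleCat.ofHom (Matrix.toLin' M) : ModuleCat.of B (Fin n → B) ⟶ ModuleCat.of B (Fin m → B)) ≫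
        (eps f m).hom
      = (eps f n).hom ≫
        (ModuleCat.ofHom (Matrix.toLin' (M.map f)) : ModuleCat.of D (Fin n → D) ⟶ ModuleCat.of D (Fin m → D)) := by
  apply ModuleCat.hom_ext
  apply LinearMap.ext
  intro x
  show (eps f m).hom ((ModuleCat.extendScalars f).map (ModuleCat.ofHom (Matrix.toLin' M)) x)
      = Matrix.toLin' (M.map f) ((eps f n).hom x)
  induction x using TensorProduct.induction_on with
  | zero => erw [map_zero, map_zero]
  | tmul d v =>
    change D at d
    show epsHom f m (d ⊗ₜ[B,f] (Matrix.toLin' M v))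
        = Matrix.toLin' (M.map f) (epsHom f n (d ⊗ₜ[B,f] v))
    erw [epsHom_tmul, epsHom_tmul]
    funext i
    simp only [Matrix.toLin'_apply, Matrix.mulVec, dotProduct, Matrix.map_apply,
      Finset.mul_sum, map_sum, map_mul]
    exact Finset.sum_congr rfl fun j _ => by ring
  | add x y hx hy => erw [map_add, map_add, map_add, map_add, hx, hy]

end Eps

/-- Skeleton category of finite free modules: objects are naturals, morphisms matrices. -/
abbrev Skel (R : Type) [CommRing R] : Type := ℕ

variable (R : Type) [CommRing R]

/-- Composition of morphisms in the skeleton category. -/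
def skelComp {n m p : ℕ} (u : Matrix (Fin m) (Fin n) R) (v : Matrix (Fin p) (Fin m) R) :
    Matrix (Fin p) (Fin n) R := v * u

instance : Category (Skel R) where
  Hom n m := Matrix (Fin m) (Fin n) R
  id n := (1 : Matrix (Fin n) (Fin n) R)
  comp {n m p} u v := skelComp R u v
  id_comp {n m} u := Matrix.mul_one u
  comp_id {n m} u := Matrix.one_mul u
  assoc {n m p q} u v w := (Matrix.mul_assoc w v u).symm

lemma skel_comp {n m p : Skel R} (u : n ⟶ m) (v : m ⟶ p) :
    u ≫ v = skelComp R u v := rfl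

lemma skel_id (n : Skel R) : 𝟙 n = (1 : Matrix (Fin n) (Fin n) R) := rfl

instance (n : ℕ) : Module.Projective R (Fin n → R) :=
  Module.Projective.of_basis (Pi.basisFun R (Fin n))

/-- The functor from the skeleton category to finite projective modules. -/
noncomputable def J : Skel R ⥤
    ObjectProperty.FullSubcategory (fun M : ModuleCat.{0} R =>
      Module.Finite R M ∧ Module.Projective R M) where
  obj n := ⟨ModuleCat.of R (Fin n → R),
    (inferInstance : Module.Finite R (Fin n → R)),
    (inferInstance : Module.Projective R (Fin n → R))⟩
  map {n m} M := ⟨ModuleCat.ofHom (Matrix.toLin' M : (Fin n → R) →ₗ[R] (Fin m → R))⟩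
  map_id n := InducedCategory.hom_ext (ModuleCat.hom_ext Matrix.toLin'_one)
  map_comp {n m p} M N := InducedCategory.hom_ext (ModuleCat.hom_ext (Matrix.toLin'_mul N M))

instance : (J R).Full where
  map_surjective {n m} u := ⟨LinearMap.toMatrix' u.hom.hom,
    InducedCategory.hom_ext (ModuleCat.hom_ext (Matrix.toLin'_toMatrix' u.hom.hom))⟩

instance : (J R).Faithful where
  map_injective := fun {n m} {a b} h => Matrix.toLin'.injective
    (congrArg (fun u : (J R).obj n ⟶ (J R).obj m => u.hom.hom) h)

lemma exists_fin_equiv [IsLocalRing R] (M : Type) [AddCommGroup M] [Module R M]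
    [Module.Finite R M] [Module.Projective R M] :
    ∃ (n : ℕ), Nonempty (M ≃ₗ[R] (Fin n → R)) := by
  haveI : Module.FinitePresentation R M := Module.finitePresentation_of_projective R M
  haveI : Module.Free R M := Module.free_of_flat_of_isLocalRing
  let b := Module.Free.chooseBasis R M
  exact ⟨_, ⟨(b.reindex (Fintype.equivFin _)).equivFun⟩⟩

instance [IsLocalRing R] : (J R).EssSurj where
  mem_essImage Y := by
    obtain ⟨hfin, hproj⟩ := Y.property
    haveI := hfin; haveI := hproj
    obtain ⟨n, ⟨e⟩⟩ := exists_fin_equiv R Y.obj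
    exact ⟨n, ⟨{
      hom := ⟨ModuleCat.ofHom (e.symm.toLinearMap : (Fin n → R) →ₗ[R] Y.obj)⟩
      inv := ⟨ModuleCat.ofHom (e.toLinearMap : Y.obj →ₗ[R] (Fin n → R))⟩
      hom_inv_id := InducedCategory.hom_ext (ModuleCat.hom_ext
        (LinearMap.ext fun x => e.apply_symm_apply x))
      inv_hom_id := InducedCategory.hom_ext (ModuleCat.hom_ext
        (LinearMap.ext fun x => e.symm_apply_apply x)) }⟩⟩

instance [IsLocalRing R] : (J R).IsEquivalence where


section Glue

variable {B C D : Type} [CommRing B] [CommRing C] [Field D]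
    (f : B →+* D) (g : C →+* D)

/-- In a local ring, an element whose image under a surjection to a field is nonzero
is a unit. -/
lemma isUnit_of_map_ne_zero [IsLocalRing B] (hf : Function.Surjective f)
    (b : B) (hb : f b ≠ 0) : IsUnit b := by
  by_contra hn
  refine hb ?_
  have h1 : b ∈ IsLocalRing.maximalIdeal B := (IsLocalRing.mem_maximalIdeal b).2 hn
  rw [← IsLocalRing.eq_maximalIdeal (RingHom.ker_isMaximal_of_surjective f hf)] at h1
  exact RingHom.mem_ker.mp h1

variable {A : Type} [CommRing A] (φB : A →+* B) (φC : A →+* C)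

lemma matrix_comm (hcomm : f.comp φB = g.comp φC) {n m : ℕ} (M : Matrix (Fin m) (Fin n) A) :
    (M.map φB).map f = (M.map φC).map g := by
  rw [Matrix.map_map, Matrix.map_map, ← RingHom.coe_comp, ← RingHom.coe_comp, hcomm]

lemma K_comm {n m : ℕ} (MB : Matrix (Fin m) (Fin n) B) (MC : Matrix (Fin m) (Fin n) C)
    (h : MB.map f = MC.map g) :
    (ModuleCat.extendScalars.{0,0,0} f).map
        (ModuleCat.ofHom (Matrix.toLin' MB) : ModuleCat.of B (Fin n → B) ⟶ ModuleCat.of B (Fin m → B)) ≫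
        (eps f m ≪≫ (eps g m).symm).hom
      = (eps f n ≪≫ (eps g n).symm).hom ≫
        (ModuleCat.extendScalars.{0,0,0} g).map
          (ModuleCat.ofHom (Matrix.toLin' MC) : ModuleCat.of C (Fin n → C) ⟶ ModuleCat.of C (Fin m → C)) := by
  simp only [Iso.trans_hom, Iso.symm_hom]
  rw [← Category.assoc, eps_naturality f MB, h]
  have e2' : (ModuleCat.extendScalars.{0,0,0} g).map
        (ModuleCat.ofHom (Matrix.toLin' MC) : ModuleCat.of C (Fin n → C) ⟶ ModuleCat.of C (Fin m → C))
      = (eps g n).hom ≫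
          (ModuleCat.ofHom (Matrix.toLin' (MC.map g)) : ModuleCat.of D (Fin n → D) ⟶ ModuleCat.of D (Fin m → D)) ≫
          (eps g m).inv := by
    rw [← Category.assoc, ← eps_naturality g MC, Category.assoc, Iso.hom_inv_id,
      Category.comp_id]
  rw [e2']
  simp only [Category.assoc, Iso.inv_hom_id_assoc]

/-- The functor from the skeleton category of `A` to gluing triples. -/
noncomputable def K (hcomm : f.comp φB = g.comp φC) : Skel A ⥤ GlueObj.{0} f g where
  obj n := { MB := ModuleCat.of B (Fin n → B)
             MC := ModuleCat.of C (Fin n → C)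
             finB := (inferInstance : Module.Finite B (Fin n → B))
             projB := (inferInstance : Module.Projective B (Fin n → B))
             finC := (inferInstance : Module.Finite C (Fin n → C))
             projC := (inferInstance : Module.Projective C (Fin n → C))
             glue := eps f n ≪≫ (eps g n).symm }
  map {n m} M :=
    { hB := ModuleCat.ofHom (Matrix.toLin' (M.map φB) : (Fin n → B) →ₗ[B] (Fin m → B))
      hC := ModuleCat.ofHom (Matrix.toLin' (M.map φC) : (Fin n → C) →ₗ[C] (Fin m → C))
      comm := K_comm f g _ _ (matrix_comm f g φB φC hcomm M) }
  map_id n := by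
    apply GlueObj.Hom.ext
    · show ModuleCat.ofHom (Matrix.toLin' (((1 : Matrix (Fin n) (Fin n) A)).map φB)
        : (Fin n → B) →ₗ[B] (Fin n → B)) = _
      rw [Matrix.map_one φB (map_zero φB) (map_one φB), Matrix.toLin'_one]
      rfl
    · show ModuleCat.ofHom (Matrix.toLin' (((1 : Matrix (Fin n) (Fin n) A)).map φC)
        : (Fin n → C) →ₗ[C] (Fin n → C)) = _
      rw [Matrix.map_one φC (map_zero φC) (map_one φC), Matrix.toLin'_one]
      rfl
  map_comp {n m p} M N := by
    apply GlueObj.Hom.ext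
    · show ModuleCat.ofHom (Matrix.toLin' ((skelComp A M N).map φB) : (Fin n → B) →ₗ[B] (Fin p → B)) = _
      rw [skelComp, Matrix.map_mul, Matrix.toLin'_mul]
      rfl
    · show ModuleCat.ofHom (Matrix.toLin' ((skelComp A M N).map φC) : (Fin n → C) →ₗ[C] (Fin p → C)) = _
      rw [skelComp, Matrix.map_mul, Matrix.toLin'_mul]
      rfl

end Glue

section Glue2

variable {B C D : Type} [CommRing B] [CommRing C] [Field D]
    {f : B →+* D} {g : C →+* D}

/-- Build an isomorphism of gluing triples from compatible component isomorphisms. -/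
noncomputable def glueIsoMk {X Y : GlueObj.{0} f g} (iB : X.MB ≅ Y.MB) (iC : X.MC ≅ Y.MC)
    (h : (ModuleCat.extendScalars f).map iB.hom ≫ Y.glue.hom
        = X.glue.hom ≫ (ModuleCat.extendScalars g).map iC.hom) : X ≅ Y where
  hom := ⟨iB.hom, iC.hom, h⟩
  inv := ⟨iB.inv, iC.inv, by
    calc (ModuleCat.extendScalars f).map iB.inv ≫ X.glue.hom
        = (ModuleCat.extendScalars f).map iB.inv ≫
            (X.glue.hom ≫ (ModuleCat.extendScalars g).map iC.hom) ≫
            (ModuleCat.extendScalars g).map iC.inv := by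
          rw [Category.assoc, ← Functor.map_comp, iC.hom_inv_id,
            CategoryTheory.Functor.map_id, Category.comp_id]
      _ = (ModuleCat.extendScalars f).map iB.inv ≫
            ((ModuleCat.extendScalars f).map iB.hom ≫ Y.glue.hom) ≫
            (ModuleCat.extendScalars g).map iC.inv := by rw [h]
      _ = Y.glue.hom ≫ (ModuleCat.extendScalars g).map iC.inv := by
          rw [← Category.assoc, ← Category.assoc, ← Functor.map_comp, iB.inv_hom_id,
            CategoryTheory.Functor.map_id, Category.id_comp]⟩
  hom_inv_id := by
    apply GlueObj.Hom.ext
    · show iB.hom ≫ iB.inv = 𝟙 _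
      simp
    · show iC.hom ≫ iC.inv = 𝟙 _
      simp
  inv_hom_id := by
    apply GlueObj.Hom.ext
    · show iB.inv ≫ iB.hom = 𝟙 _
      simp
    · show iC.inv ≫ iC.hom = 𝟙 _
      simp

variable {A : Type} [CommRing A] {φB : A →+* B} {φC : A →+* C}

lemma K_full_aux {n m : ℕ}
    (hB : ModuleCat.of B (Fin n → B) ⟶ ModuleCat.of B (Fin m → B))
    (hC : ModuleCat.of C (Fin n → C) ⟶ ModuleCat.of C (Fin m → C))
    (h : (ModuleCat.extendScalars.{0,0,0} f).map hB ≫ (eps f m ≪≫ (eps g m).symm).hom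
        = (eps f n ≪≫ (eps g n).symm).hom ≫ (ModuleCat.extendScalars.{0,0,0} g).map hC) :
    (LinearMap.toMatrix' hB.hom).map f
      = (LinearMap.toMatrix' hC.hom).map g := by
  have e1 := eps_naturality f (LinearMap.toMatrix' hB.hom)
  rw [Matrix.toLin'_toMatrix', ModuleCat.ofHom_hom] at e1
  have e2 := eps_naturality g (LinearMap.toMatrix' hC.hom)
  rw [Matrix.toLin'_toMatrix', ModuleCat.ofHom_hom] at e2
  simp only [Iso.trans_hom, Iso.symm_hom] at h
  rw [← Category.assoc, e1] at h
  have e2' : (ModuleCat.extendScalars.{0,0,0} g).map hC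
      = (eps g n).hom ≫
          (ModuleCat.ofHom (Matrix.toLin' ((LinearMap.toMatrix' hC.hom).map g)) :
            ModuleCat.of D (Fin n → D) ⟶ ModuleCat.of D (Fin m → D)) ≫ (eps g m).inv := by
    rw [← Category.assoc, ← e2, Category.assoc, Iso.hom_inv_id, Category.comp_id]
  rw [e2'] at h
  simp only [Category.assoc, Iso.inv_hom_id_assoc] at h
  have h2 := (Iso.cancel_iso_hom_left (eps f n) _ _).mp h
  have h3 := (cancel_mono (eps g m).inv).mp h2
  exact Matrix.toLin'.injective (congrArg ModuleCat.Hom.hom h3)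

end Glue2

section Local

variable {B C D : Type} [CommRing B] [CommRing C] [Field D]
    [IsDomain B] [ValuationRing B] [IsDomain C] [ValuationRing C]
    (f : B →+* D) (g : C →+* D)
    (hf : Function.Surjective f) (hg : Function.Injective g)
    {A : Type} [CommRing A] (φB : A →+* B) (φC : A →+* C)
    (hcomm : f.comp φB = g.comp φC)
    (hinj : Function.Injective fun a : A => (φB a, φC a))
    (hsurj : ∀ (b : B) (c : C), f b = g c → ∃ a : A, φB a = b ∧ φC a = c)

include hf hcomm hinj hsurj in
lemma isUnit_of_components (a : A) (h : IsUnit (φC a)) : IsUnit a := by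
  obtain ⟨u, hu⟩ := h
  have hfb : f (φB a) = g (φC a) := RingHom.congr_fun hcomm a
  have h1 : f (φB a) ≠ 0 := by
    rw [hfb, ← hu]
    intro h0
    have : (g ↑u) * (g ↑u⁻¹) = 1 := by rw [← map_mul, Units.mul_inv, map_one]
    rw [h0, zero_mul] at this
    exact zero_ne_one this
  have hBu : IsUnit (φB a) := isUnit_of_map_ne_zero f hf _ h1
  obtain ⟨w, hw⟩ := hBu
  have hwu : f ↑w⁻¹ = g ↑u⁻¹ := by
    have h2 : f ↑w * f ↑w⁻¹ = 1 := by rw [← map_mul, Units.mul_inv, map_one]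
    have h3' : g ↑u⁻¹ * g ↑u = 1 := by rw [← map_mul, Units.inv_mul, map_one]
    have h4 : f ↑w = g ↑u := by rw [hw, hu, hfb]
    calc f ↑w⁻¹ = (g ↑u⁻¹ * g ↑u) * f ↑w⁻¹ := by rw [h3', one_mul]
      _ = g ↑u⁻¹ * (f ↑w * f ↑w⁻¹) := by rw [h4]; ring
      _ = g ↑u⁻¹ := by rw [h2, mul_one]
  obtain ⟨a', ha'B, ha'C⟩ := hsurj ↑w⁻¹ ↑u⁻¹ hwu
  have key : a * a' = 1 := by
    apply hinj
    show (φB (a * a'), φC (a * a')) = (φB 1, φC 1)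
    rw [map_mul, map_mul, map_one, map_one, ha'B, ha'C, ← hw, ← hu]
    rw [Prod.mk.injEq]
    exact ⟨by rw [Units.mul_inv], by rw [Units.mul_inv]⟩
  exact IsUnit.of_mul_eq_one a' key

include hf hcomm hinj hsurj in
lemma isLocalRing_A : IsLocalRing A := by
  have : Nontrivial A := by
    refine ⟨0, 1, fun h01 => ?_⟩
    have := congrArg φC h01
    rw [map_zero, map_one] at this
    exact zero_ne_one this
  apply IsLocalRing.of_isUnit_or_isUnit_one_sub_self
  intro a
  rcases IsLocalRing.isUnit_or_isUnit_one_sub_self (φC a) with h | h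
  · exact Or.inl (isUnit_of_components f g hf φB φC hcomm hinj hsurj a h)
  · refine Or.inr (isUnit_of_components f g hf φB φC hcomm hinj hsurj (1 - a) ?_)
    rwa [map_sub, map_one]

end Local

section KEquiv

variable {B C D : Type} [CommRing B] [CommRing C] [Field D]
    [IsDomain B] [ValuationRing B] [IsDomain C] [ValuationRing C]
    (f : B →+* D) (g : C →+* D)
    (hf : Function.Surjective f) (hg : Function.Injective g)
    {A : Type} [CommRing A] (φB : A →+* B) (φC : A →+* C)
    (hcomm : f.comp φB = g.comp φC)
    (hinj : Function.Injective fun a : A => (φB a, φC a))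
    (hsurj : ∀ (b : B) (c : C), f b = g c → ∃ a : A, φB a = b ∧ φC a = c)

include hinj in
lemma K_faithful : (K f g φB φC hcomm).Faithful := by
  constructor
  intro n m M N h
  have hB : (Matrix.toLin' (M.map φB) : (Fin n → B) →ₗ[B] (Fin m → B))
      = Matrix.toLin' (N.map φB) := congrArg (fun u => ModuleCat.Hom.hom (GlueObj.Hom.hB u)) h
  have hC : (Matrix.toLin' (M.map φC) : (Fin n → C) →ₗ[C] (Fin m → C))
      = Matrix.toLin' (N.map φC) := congrArg (fun u => ModuleCat.Hom.hom (GlueObj.Hom.hC u)) h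
  have hB' : M.map φB = N.map φB := Matrix.toLin'.injective hB
  have hC' : M.map φC = N.map φC := Matrix.toLin'.injective hC
  funext i j
  apply hinj
  show (φB (M i j), φC (M i j)) = (φB (N i j), φC (N i j))
  rw [Prod.mk.injEq]
  exact ⟨congrFun (congrFun hB' i) j, congrFun (congrFun hC' i) j⟩

include hsurj in
lemma K_full : (K f g φB φC hcomm).Full := by
  constructor
  intro n m u
  have hmat := K_full_aux (f := f) (g := g) u.hB u.hC u.comm
  choose a haB haC using fun (i : Fin m) (j : Fin n) =>
    hsurj (LinearMap.toMatrix' u.hB.hom i j)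
      (LinearMap.toMatrix' u.hC.hom i j)
      (congrFun (congrFun hmat i) j)
  refine ⟨Matrix.of a, ?_⟩
  have haB' : (Matrix.of a).map φB
      = LinearMap.toMatrix' u.hB.hom := by
    funext i j; exact haB i j
  have haC' : (Matrix.of a).map φC
      = LinearMap.toMatrix' u.hC.hom := by
    funext i j; exact haC i j
  apply GlueObj.Hom.ext
  · show ModuleCat.ofHom (Matrix.toLin' ((Matrix.of a).map φB) : (Fin n → B) →ₗ[B] (Fin m → B)) = u.hB
    rw [haB']
    exact ModuleCat.hom_ext (Matrix.toLin'_toMatrix' _)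
  · show ModuleCat.ofHom (Matrix.toLin' ((Matrix.of a).map φC) : (Fin n → C) →ₗ[C] (Fin m → C)) = u.hC
    rw [haC']
    exact ModuleCat.hom_ext (Matrix.toLin'_toMatrix' _)

include hf in
lemma K_essSurj : (K f g φB φC hcomm).EssSurj := by
  constructor
  intro X
  haveI := X.finB; haveI := X.projB; haveI := X.finC; haveI := X.projC
  obtain ⟨nB, ⟨eB⟩⟩ := exists_fin_equiv B X.MB
  obtain ⟨nC, ⟨eC⟩⟩ := exists_fin_equiv C X.MC
  let isoB0 : ModuleCat.of B (Fin nB → B) ≅ X.MB := eB.symm.toModuleIso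
  let isoC0 : ModuleCat.of C (Fin nC → C) ≅ X.MC := eC.symm.toModuleIso
  let ψ0 : ModuleCat.of D (Fin nB → D) ≅ ModuleCat.of D (Fin nC → D) :=
    (eps f nB).symm ≪≫ (ModuleCat.extendScalars.{0,0,0} f).mapIso isoB0 ≪≫ X.glue ≪≫
      ((ModuleCat.extendScalars.{0,0,0} g).mapIso isoC0).symm ≪≫ eps g nC
  have hn : nB = nC := by
    have e := ψ0.toLinearEquiv
    have h1 : Module.finrank D (Fin nB → D) = Module.finrank D (Fin nC → D) := e.finrank_eq
    rwa [Module.finrank_fin_fun, Module.finrank_fin_fun] at h1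
  subst hn
  let T : Matrix (Fin nB) (Fin nB) D := LinearMap.toMatrix' ψ0.inv.hom
  choose U hU using fun (i j : Fin nB) => hf (T i j)
  have hUf : (Matrix.of U).map f = T := by funext i j; exact hU i j
  have hdetT : IsUnit T.det := by
    have hcompinv : (ψ0.inv.hom.comp
        ψ0.hom.hom) = LinearMap.id := congrArg ModuleCat.Hom.hom ψ0.hom_inv_id
    have hm : T * LinearMap.toMatrix' ψ0.hom.hom = 1 := by
      rw [show T * LinearMap.toMatrix' ψ0.hom.hom
          = LinearMap.toMatrix' (ψ0.inv.hom.comp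
            ψ0.hom.hom)
        from (LinearMap.toMatrix'_comp _ _).symm, hcompinv, LinearMap.toMatrix'_id]
    exact IsUnit.of_mul_eq_one _ (by rw [← Matrix.det_mul, hm, Matrix.det_one])
  have hdetU : IsUnit (Matrix.of U).det := by
    have hfd : f (Matrix.of U).det = T.det := by rw [RingHom.map_det, RingHom.mapMatrix_apply, hUf]
    exact isUnit_of_map_ne_zero f hf _ (by rw [hfd]; exact hdetT.ne_zero)
  have hmul1 : Matrix.of U * (Matrix.of U)⁻¹ = 1 := Matrix.mul_nonsing_inv _ hdetU
  have hmul2 : (Matrix.of U)⁻¹ * Matrix.of U = 1 := Matrix.nonsing_inv_mul _ hdetU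
  let matIso : ModuleCat.of B (Fin nB → B) ≅ ModuleCat.of B (Fin nB → B) :=
    { hom := ModuleCat.ofHom (Matrix.toLin' (Matrix.of U) : (Fin nB → B) →ₗ[B] (Fin nB → B))
      inv := ModuleCat.ofHom (Matrix.toLin' (Matrix.of U)⁻¹ : (Fin nB → B) →ₗ[B] (Fin nB → B))
      hom_inv_id := by
        apply ModuleCat.hom_ext
        show ((Matrix.toLin' (Matrix.of U)⁻¹ : (Fin nB → B) →ₗ[B] (Fin nB → B)).comp
          (Matrix.toLin' (Matrix.of U))) = LinearMap.id
        rw [← Matrix.toLin'_mul, hmul2, Matrix.toLin'_one]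
      inv_hom_id := by
        apply ModuleCat.hom_ext
        show ((Matrix.toLin' (Matrix.of U) : (Fin nB → B) →ₗ[B] (Fin nB → B)).comp
          (Matrix.toLin' (Matrix.of U)⁻¹)) = LinearMap.id
        rw [← Matrix.toLin'_mul, hmul1, Matrix.toLin'_one] }
  have hUT : (ModuleCat.ofHom (Matrix.toLin' ((Matrix.of U).map f)) :
      ModuleCat.of D (Fin nB → D) ⟶ ModuleCat.of D (Fin nB → D)) = ψ0.inv := by
    rw [hUf, Matrix.toLin'_toMatrix', ModuleCat.ofHom_hom]
  have h1 : (eps f nB).hom ≫ ψ0.inv ≫ (eps f nB).inv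
      = (ModuleCat.extendScalars.{0,0,0} f).map matIso.hom := by
    rw [← hUT, ← Category.assoc, ← eps_naturality f (Matrix.of U), Category.assoc,
      Iso.hom_inv_id, Category.comp_id]
  refine ⟨nB, ⟨glueIsoMk (matIso ≪≫ isoB0) isoC0 ?_⟩⟩
  show (ModuleCat.extendScalars.{0,0,0} f).map (matIso.hom ≫ isoB0.hom) ≫ X.glue.hom
    = (eps f nB ≪≫ (eps g nB).symm).hom ≫ (ModuleCat.extendScalars.{0,0,0} g).map isoC0.hom
  rw [Functor.map_comp, ← h1]
  simp only [ψ0, Iso.trans_inv, Iso.symm_inv, Iso.trans_hom, Iso.symm_hom,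
    Functor.mapIso_hom, Functor.mapIso_inv, Category.assoc]
  simp only [Iso.inv_hom_id_assoc, Iso.hom_inv_id_assoc]
  rw [← Functor.map_comp_assoc, Iso.inv_hom_id, CategoryTheory.Functor.map_id, Category.id_comp]
  simp only [Iso.inv_hom_id, Category.comp_id]

include hf hg hinj hsurj in
lemma K_isEquivalence : (K f g φB φC hcomm).IsEquivalence := by
  haveI := K_faithful f g φB φC hcomm hinj
  haveI := K_full f g φB φC hcomm hsurj
  haveI := K_essSurj f g hf φB φC hcomm
  exact {}

end KEquiv

end MilnorAux


/-- Milnor patching for finite projective modules.  Let `B = O_C` be a valuation ring with residue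
field `D = k` (via the surjection `f : B → D`), let `C = V̄ ⊆ k` be a subring of `k` which is a
valuation ring (with the injection `g : C → D`), and let `A = V` be the fiber product
`A = O_C ×_k V̄` (hypotheses `hcomm`, `hinj`, `hsurj`); in the motivating situation `V` is a
valuation ring with algebraically closed fraction field, `k` is the residue field of `O_C`,
and `V̄` is the image of `V` in `k`.  Then to give a finite projective module over `V = A` is
equivalent to giving finite projective modules over `O_C = B` and over `V̄ = C` together with
an isomorphism of their base changes to `k = D`: the category of finite projective
`A`-modules is equivalent to the category of gluing triples. -/
theorem milnor_patching_finite_projective_modules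
    (B C D : Type) [CommRing B] [CommRing C] [Field D]
    [IsDomain B] [ValuationRing B] [IsDomain C] [ValuationRing C]
    (f : B →+* D) (g : C →+* D)
    (hf : Function.Surjective f) (hg : Function.Injective g)
    (A : Type) [CommRing A] (φB : A →+* B) (φC : A →+* C)
    (hcomm : f.comp φB = g.comp φC)
    (hinj : Function.Injective fun a : A => (φB a, φC a))
    (hsurj : ∀ (b : B) (c : C), f b = g c → ∃ a : A, φB a = b ∧ φC a = c) :
    Nonempty
      ((ObjectProperty.FullSubcategory fun M : ModuleCat.{0} A =>
          Module.Finite A M ∧ Module.Projective A M) ≌ GlueObj.{0} f g) := by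
  haveI : IsLocalRing A := MilnorAux.isLocalRing_A f g hf φB φC hcomm hinj hsurj
  haveI := MilnorAux.K_isEquivalence f g hf hg φB φC hcomm hinj hsurj
  exact ⟨(MilnorAux.J A).asEquivalence.symm.trans
    (MilnorAux.K f g φB φC hcomm).asEquivalence⟩
end

section
/- Let C be an algebraically closed nonarchimedean field of characteristic p with ring of integers O_C♭ of its tilt, A_inf = W(O_{C^♭}), μ = [ε] - 1 for a compatible system ε of p-power roots of unity, and ξ a generator of the kernel of θ : A_inf → O_C. Then the closed subset of Spec(A_inf) complementary to the open set Spec(A_inf[1/p]) ∪ Spec(A_inf[1/μ]) consists of exactly one point, namely the unique closed point; equivalently, A_inf/(p, μ) ≅ O_{C^♭}/(ε-1) where ε - 1 is a pseudouniformizer of O_{C^♭}. -/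
open WittVector Ideal

section Aux

variable (p : ℕ) [hp : Fact p.Prime]
variable (R : Type) [CommRing R] [CharP R p] [PerfectRing R p]

lemma aux_mem_span_p (x : WittVector p R) (hx : x.coeff 0 = 0) :
    x ∈ Ideal.span {(p : WittVector p R)} := by
  have hxv : x = verschiebung (WittVector.mk p fun n => x.coeff (n + 1)) := by
    ext n
    cases n with
    | zero => simpa [verschiebung_coeff_zero] using hx
    | succ n => simp [verschiebung_coeff_succ, WittVector.coeff_mk]
  set y := WittVector.mk p fun n => x.coeff (n + 1)
  have : x = (frobeniusEquiv p R).symm y * p := by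
    rw [hxv, ← verschiebung_frobenius ((frobeniusEquiv p R).symm y)]
    congr 1
    exact ((frobeniusEquiv p R).apply_symm_apply y).symm
  rw [Ideal.mem_span_singleton]
  exact ⟨(frobeniusEquiv p R).symm y, by rw [this, mul_comm]⟩

end Aux

/-- Let `C` be an algebraically closed perfectoid field of mixed characteristic `(0,p)`, and let
`R = O_{C^♭}` be the ring of integers of its tilt: a perfect valuation ring of characteristic
`p`, of rank one (`hrank`), with algebraically closed fraction field `F`.  Let
`A_inf = W(O_{C^♭})` be the ring of Witt vectors, `ε ∈ O_{C^♭}` the element coming from a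
compatible system of `p`-power roots of unity — so that `ε` is a unit, `ε ≠ 1` and `ε - 1` is a
pseudouniformizer (nonzero and not a unit) — and `μ = [ε] - 1` the corresponding element of
`A_inf`, where `[·]` is the Teichmüller lift.  Then the closed subset of `Spec A_inf`
complementary to `Spec A_inf[1/p] ∪ Spec A_inf[1/μ]`, i.e. the set of primes containing both
`p` and `μ`, consists of exactly one point, which is the unique closed (maximal) point;
equivalently `A_inf/(p, μ) ≃ O_{C^♭}/(ε - 1)`. -/
theorem Ainf_complement_of_punctured_locus_is_closed_point
    (p : ℕ) [hp : Fact p.Prime]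
    (R : Type) [CommRing R] [IsDomain R] [ValuationRing R] [CharP R p] [PerfectRing R p]
    (F : Type) [Field F] [Algebra R F] [IsFractionRing R F] [IsAlgClosed F]
    (hrank : ∀ P : PrimeSpectrum R, P.asIdeal = ⊥ ∨ P.asIdeal.IsMaximal)
    (ε : R) (hεunit : IsUnit ε) (hεne : ε ≠ 1)
    (hps1 : ε - 1 ≠ 0) (hps2 : ¬ IsUnit (ε - 1)) :
    (∃! P : PrimeSpectrum (WittVector p R),
        (p : WittVector p R) ∈ P.asIdeal ∧
          (WittVector.teichmuller p ε - 1) ∈ P.asIdeal) ∧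
    (∀ P : PrimeSpectrum (WittVector p R),
        (p : WittVector p R) ∈ P.asIdeal →
          (WittVector.teichmuller p ε - 1) ∈ P.asIdeal → P.asIdeal.IsMaximal) ∧
    Nonempty
      ((WittVector p R ⧸
          Ideal.span {(p : WittVector p R), WittVector.teichmuller p ε - 1}) ≃+*
        (R ⧸ Ideal.span {ε - 1})) := by
  set g : WittVector p R →+* R := WittVector.constantCoeff
  have hg_surj : Function.Surjective g := fun r =>
    ⟨WittVector.teichmuller p r, WittVector.teichmuller_coeff_zero p r⟩
  have hgp : g (p : WittVector p R) = 0 := by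
    rw [map_natCast]; exact CharP.cast_eq_zero R p
  have hgμ : g (WittVector.teichmuller p ε - 1) = ε - 1 := by
    rw [map_sub, map_one,
      show g (WittVector.teichmuller p ε) = ε from WittVector.teichmuller_coeff_zero p ε]
  -- the distinguished maximal prime
  have hmem_m : ε - 1 ∈ IsLocalRing.maximalIdeal R := hps2
  set P₀ : PrimeSpectrum (WittVector p R) :=
    ⟨Ideal.comap g (IsLocalRing.maximalIdeal R), Ideal.comap_isPrime g _⟩
  have hP₀p : (p : WittVector p R) ∈ P₀.asIdeal := by
    show _ ∈ Ideal.comap g _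
    rw [Ideal.mem_comap, hgp]; exact Ideal.zero_mem _
  have hP₀μ : (WittVector.teichmuller p ε - 1) ∈ P₀.asIdeal := by
    show _ ∈ Ideal.comap g _
    rw [Ideal.mem_comap, hgμ]; exact hmem_m
  have key : ∀ P : PrimeSpectrum (WittVector p R),
      (p : WittVector p R) ∈ P.asIdeal →
        (WittVector.teichmuller p ε - 1) ∈ P.asIdeal → P = P₀ := by
    intro P hp' hμ'
    have hker : RingHom.ker g ≤ P.asIdeal := by
      intro x hx
      have := aux_mem_span_p p R x hx
      exact (Ideal.span_singleton_le_iff_mem _).2 hp' this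
    haveI := P.isPrime
    haveI hQprime : (Ideal.map g P.asIdeal).IsPrime :=
      Ideal.map_isPrime_of_surjective hg_surj hker
    have hQμ : ε - 1 ∈ Ideal.map g P.asIdeal := by
      rw [← hgμ]; exact Ideal.mem_map_of_mem g hμ'
    have hQmax : (Ideal.map g P.asIdeal).IsMaximal := by
      rcases hrank ⟨Ideal.map g P.asIdeal, hQprime⟩ with h | h
      · exfalso
        have : ε - 1 ∈ (⊥ : Ideal R) := by
          have := hQμ; rwa [show Ideal.map g P.asIdeal = ⊥ from h] at this
        exact hps1 (Ideal.mem_bot.mp this)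
      · exact h
    have hQ : Ideal.map g P.asIdeal = IsLocalRing.maximalIdeal R :=
      IsLocalRing.eq_maximalIdeal hQmax
    have : Ideal.comap g (Ideal.map g P.asIdeal) = P.asIdeal := by
      rw [Ideal.comap_map_of_surjective g hg_surj, sup_eq_left.mpr]
      · intro x hx; exact hker hx
    apply PrimeSpectrum.ext
    rw [← this, hQ]
  constructor
  · exact ⟨P₀, ⟨hP₀p, hP₀μ⟩, fun P hP => key P hP.1 hP.2⟩
  constructor
  · intro P hp' hμ'
    rw [key P hp' hμ']
    exact Ideal.comap_isMaximal_of_surjective g hg_surj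
  · -- the ring isomorphism
    set f : WittVector p R →+* R ⧸ Ideal.span {ε - 1} :=
      (Ideal.Quotient.mk (Ideal.span {ε - 1})).comp g
    have hf_surj : Function.Surjective f :=
      (Ideal.Quotient.mk_surjective).comp hg_surj
    have hker : RingHom.ker f =
        Ideal.span {(p : WittVector p R), WittVector.teichmuller p ε - 1} := by
      apply le_antisymm
      · intro x hx
        have hx' : g x ∈ Ideal.span {ε - 1} := by
          rwa [← Ideal.Quotient.eq_zero_iff_mem]
        rw [Ideal.mem_span_singleton] at hx'
        obtain ⟨r, hr⟩ := hx'
        have hsub : (x - (WittVector.teichmuller p ε - 1) * WittVector.teichmuller p r).coeff 0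
            = 0 := by
          have : g (x - (WittVector.teichmuller p ε - 1) * WittVector.teichmuller p r) = 0 := by
            rw [map_sub, _root_.map_mul, hgμ, hr]
            rw [show g (WittVector.teichmuller p r) = r from WittVector.teichmuller_coeff_zero p r]
            ring
          exact this
        have hmem := aux_mem_span_p p R _ hsub
        have hple : Ideal.span {(p : WittVector p R)} ≤
            Ideal.span {(p : WittVector p R), WittVector.teichmuller p ε - 1} :=
          Ideal.span_mono (by simp)
        have hμmem : (WittVector.teichmuller p ε - 1) ∈
            Ideal.span {(p : WittVector p R), WittVector.teichmuller p ε - 1} :=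
          Ideal.subset_span (by simp)
        have := Ideal.add_mem _ (hple hmem)
          (Ideal.mul_mem_right (WittVector.teichmuller p r) _ hμmem)
        simpa using this
      · rw [Ideal.span_le]
        rintro x (rfl | rfl)
        · show f _ = 0
          simp only [f, RingHom.comp_apply, hgp, map_zero]
        · show f _ = 0
          simp only [f, RingHom.comp_apply, hgμ]
          rw [Ideal.Quotient.eq_zero_iff_mem]
          exact Ideal.subset_span rfl
    exact ⟨(Ideal.quotEquivOfEq hker.symm).trans
      (RingHom.quotientKerEquivOfSurjective hf_surj)⟩
end
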